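/- Let L be a real m×n matrix with linearly independent rows, let F ⊆ ℝⁿ be a finite set of vectors with all coordinates nonnegative, and let T be an invertible real m×m matrix such that every row of TL is a finite linear combination of elements of F with nonnegative coefficients. Then there exist m linearly independent vectors e₁, …, e_m ∈ F such that Σᵢ ‖eᵢ‖₀ ≤ ‖TL‖₀. -/

import Mathlib

/-- The ℓ0-norm of a vector: the number of nonzero entries. -/
noncomputable def l0Vec {n : ℕ} (v : Fin n → ℝ) : ℕ := Set.ncard {j | v j ≠ 0}

/-- The ℓ0-norm of a matrix: the number of nonzero entries. -/
noncomputable def l0Mat {m n : ℕ} (A : Matrix (Fin m) (Fin n) ℝ) : ℕ :=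
  Set.ncard {p : Fin m × Fin n | A p.1 p.2 ≠ 0}

open Submodule Module

variable {V : Type*} [AddCommGroup V] [Module ℝ V] [DecidableEq V]

/-- Rado's theorem for vector spaces over ℝ. -/
lemma rado_aux (m : ℕ) : ∀ (N : ℕ) (S : Fin m → Finset V), (∑ i, (S i).card) = N →
    (∀ I : Finset (Fin m), I.card ≤ finrank ℝ (span ℝ ((I.sup S : Finset V) : Set V))) →
    ∃ e : Fin m → V, (∀ i, e i ∈ S i) ∧ LinearIndependent ℝ e := by
  intro N
  induction N using Nat.strong_induction_on with
  | _ N ih =>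
    intro S hN hH
    classical
    by_cases hsmall : ∀ i, (S i).card ≤ 1
    · -- all singletons
      have hcard : ∀ i, (S i).card = 1 := by
        intro i
        refine le_antisymm (hsmall i) ?_
        have h1 := hH {i}
        rw [Finset.card_singleton, Finset.sup_singleton] at h1
        have h2 : finrank ℝ (span ℝ ((S i : Finset V) : Set V)) ≤ (S i).card :=
          finrank_span_finset_le_card (S i)
        omega
      have hsing : ∀ i, ∃ a, S i = {a} := fun i => Finset.card_eq_one.mp (hcard i)
      set e : Fin m → V := fun i => (hsing i).choose with he
      have heS : ∀ i, S i = {e i} := fun i => (hsing i).choose_spec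
      have hmem : ∀ i, e i ∈ S i := fun i => by rw [heS i]; exact Finset.mem_singleton_self _
      have hsup : Finset.univ.sup S = Finset.univ.image e := by
        ext z
        simp only [Finset.mem_sup, Finset.mem_image, Finset.mem_univ, true_and]
        constructor
        · rintro ⟨i, hz⟩
          exact ⟨i, by rw [heS i] at hz; exact (Finset.mem_singleton.mp hz).symm⟩
        · rintro ⟨i, rfl⟩; exact ⟨i, hmem i⟩
      have hrange : Set.range e = ((Finset.univ.image e : Finset V) : Set V) := by
        ext z; simp
      refine ⟨e, hmem, ?_⟩
      rw [linearIndependent_iff_card_eq_finrank_span]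
      have hle : finrank ℝ (span ℝ (Set.range e)) ≤ m := by
        rw [hrange]
        calc finrank ℝ (span ℝ ((Finset.univ.image e : Finset V) : Set V))
            ≤ (Finset.univ.image e).card := finrank_span_finset_le_card _
          _ ≤ (Finset.univ : Finset (Fin m)).card := Finset.card_image_le
          _ = m := by simp
      have hge : m ≤ finrank ℝ (span ℝ (Set.range e)) := by
        have := hH Finset.univ
        rw [hsup, ← hrange] at this
        simpa using this
      unfold Set.finrank
      simp only [Fintype.card_fin]
      omega
    · push_neg at hsmall
      obtain ⟨i0, hi0big⟩ := hsmall
      obtain ⟨x, hx, y, hy, hxy⟩ := Finset.one_lt_card.mp hi0big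
      set Srm : V → Fin m → Finset V := fun z => Function.update S i0 ((S i0).erase z) with hSrm
      have hSrm_eq : ∀ (z : V) (j : Fin m), j ≠ i0 → Srm z j = S j := by
        intro z j h; simp [hSrm, Function.update_of_ne h]
      have hSrm_i0 : ∀ z : V, Srm z i0 = (S i0).erase z := by
        intro z; simp [hSrm]
      have hsub : ∀ (z : V) (j : Fin m), Srm z j ⊆ S j := by
        intro z j
        by_cases h : j = i0
        · subst h; rw [hSrm_i0]; exact Finset.erase_subset _ _
        · rw [hSrm_eq z j h]
      have hsum : ∀ z ∈ S i0, ∑ i, ((Srm z) i).card < N := by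
        intro z hz
        rw [← hN]
        apply Finset.sum_lt_sum
        · exact fun i _ => Finset.card_le_card (hsub z i)
        · refine ⟨i0, Finset.mem_univ i0, ?_⟩
          rw [hSrm_i0, Finset.card_erase_of_mem hz]
          omega
      by_cases hHx : ∀ I : Finset (Fin m),
          I.card ≤ finrank ℝ (span ℝ ((I.sup (Srm x) : Finset V) : Set V))
      · obtain ⟨e, he1, he2⟩ := ih _ (hsum x hx) (Srm x) rfl hHx
        exact ⟨e, fun i => hsub x i (he1 i), he2⟩
      by_cases hHy : ∀ I : Finset (Fin m),
          I.card ≤ finrank ℝ (span ℝ ((I.sup (Srm y) : Finset V) : Set V))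
      · obtain ⟨e, he1, he2⟩ := ih _ (hsum y hy) (Srm y) rfl hHy
        exact ⟨e, fun i => hsub y i (he1 i), he2⟩
      exfalso
      push_neg at hHx hHy
      obtain ⟨A, hA⟩ := hHx
      obtain ⟨B, hB⟩ := hHy
      have hmemA : ∀ {z : V} {C : Finset (Fin m)},
          finrank ℝ (span ℝ ((C.sup (Srm z) : Finset V) : Set V)) < C.card → i0 ∈ C := by
        intro z C hC
        by_contra h
        have heq : C.sup (Srm z) = C.sup S :=
          Finset.sup_congr rfl fun j hj => hSrm_eq z j (fun he' => h (he' ▸ hj))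
        rw [heq] at hC
        exact absurd (hH C) (not_le.mpr hC)
      have hi0A : i0 ∈ A := hmemA hA
      have hi0B : i0 ∈ B := hmemA hB
      set U := span ℝ ((A.sup (Srm x) : Finset V) : Set V) with hU
      set W := span ℝ ((B.sup (Srm y) : Finset V) : Set V) with hW
      have hsupUW : span ℝ (((A ∪ B).sup S : Finset V) : Set V) ≤ U ⊔ W := by
        rw [Submodule.span_le]
        intro z hz
        obtain ⟨j, hj, hzj⟩ := Finset.mem_sup.mp (Finset.mem_coe.mp hz)
        have inU : ∀ j ∈ A, z ∈ Srm x j → z ∈ (U ⊔ W : Submodule ℝ V) := fun j hjA hzz =>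
          le_sup_left (α := Submodule ℝ V)
            (Submodule.subset_span (Finset.mem_coe.mpr (Finset.mem_sup.mpr ⟨j, hjA, hzz⟩)))
        have inW : ∀ j ∈ B, z ∈ Srm y j → z ∈ (U ⊔ W : Submodule ℝ V) := fun j hjB hzz =>
          le_sup_right (α := Submodule ℝ V)
            (Submodule.subset_span (Finset.mem_coe.mpr (Finset.mem_sup.mpr ⟨j, hjB, hzz⟩)))
        by_cases h : j = i0
        · subst h
          by_cases hzx : z = x
          · refine inW j hi0B ?_
            rw [hSrm_i0]
            exact Finset.mem_erase.mpr ⟨hzx ▸ hxy, hzj⟩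
          · refine inU j hi0A ?_
            rw [hSrm_i0]
            exact Finset.mem_erase.mpr ⟨hzx, hzj⟩
        · rcases Finset.mem_union.mp hj with hjA | hjB
          · exact inU j hjA (by rw [hSrm_eq x j h]; exact hzj)
          · exact inW j hjB (by rw [hSrm_eq y j h]; exact hzj)
      have hinfUW : span ℝ ((((A ∩ B).erase i0).sup S : Finset V) : Set V) ≤ U ⊓ W := by
        refine le_inf ?_ ?_
        · apply Submodule.span_mono
          intro z hz
          obtain ⟨j, hj, hzj⟩ := Finset.mem_sup.mp (Finset.mem_coe.mp hz)
          have hji0 : j ≠ i0 := Finset.ne_of_mem_erase hj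
          have hjA : j ∈ A := (Finset.mem_inter.mp (Finset.mem_of_mem_erase hj)).1
          exact Finset.mem_coe.mpr
            (Finset.mem_sup.mpr ⟨j, hjA, by rw [hSrm_eq x j hji0]; exact hzj⟩)
        · apply Submodule.span_mono
          intro z hz
          obtain ⟨j, hj, hzj⟩ := Finset.mem_sup.mp (Finset.mem_coe.mp hz)
          have hji0 : j ≠ i0 := Finset.ne_of_mem_erase hj
          have hjB : j ∈ B := (Finset.mem_inter.mp (Finset.mem_of_mem_erase hj)).2
          exact Finset.mem_coe.mpr
            (Finset.mem_sup.mpr ⟨j, hjB, by rw [hSrm_eq y j hji0]; exact hzj⟩)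
      have hmod := Submodule.finrank_sup_add_finrank_inf_eq U W
      have h1 : (A ∪ B).card ≤ finrank ℝ (U ⊔ W : Submodule ℝ V) :=
        (hH (A ∪ B)).trans (Submodule.finrank_mono hsupUW)
      have h2 : ((A ∩ B).erase i0).card ≤ finrank ℝ (U ⊓ W : Submodule ℝ V) :=
        (hH _).trans (Submodule.finrank_mono hinfUW)
      have h3 : ((A ∩ B).erase i0).card = (A ∩ B).card - 1 :=
        Finset.card_erase_of_mem (Finset.mem_inter.mpr ⟨hi0A, hi0B⟩)
      have h4 : 1 ≤ (A ∩ B).card :=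
        Finset.card_pos.mpr ⟨i0, Finset.mem_inter.mpr ⟨hi0A, hi0B⟩⟩
      have h5 := Finset.card_union_add_card_inter A B
      omega

lemma l0Mat_eq_sum {m n : ℕ} (A : Matrix (Fin m) (Fin n) ℝ) :
    l0Mat A = ∑ i, l0Vec (A i) := by
  classical
  unfold l0Mat l0Vec
  calc Set.ncard {p : Fin m × Fin n | A p.1 p.2 ≠ 0}
      = Nat.card {p : Fin m × Fin n // A p.1 p.2 ≠ 0} :=
        (Nat.card_coe_set_eq _).symm
    _ = Nat.card (Σ i : Fin m, {j : Fin n // A i j ≠ 0}) :=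
        Nat.card_congr (Equiv.subtypeProdEquivSigmaSubtype (fun (i : Fin m) (j : Fin n) => A i j ≠ 0))
    _ = ∑ i, Nat.card {j : Fin n // A i j ≠ 0} := by
        rw [Nat.card_eq_fintype_card, Fintype.card_sigma]
        exact Finset.sum_congr rfl fun i _ => (Nat.card_eq_fintype_card).symm
    _ = ∑ i, Set.ncard {j : Fin n | A i j ≠ 0} :=
        Finset.sum_congr rfl fun i _ => Nat.card_coe_set_eq _

lemma rows_li {m n : ℕ} (L : Matrix (Fin m) (Fin n) ℝ) (hL : LinearIndependent ℝ L)
    (T : Matrix (Fin m) (Fin m) ℝ) (hT : IsUnit T) :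
    LinearIndependent ℝ (T * L : Matrix (Fin m) (Fin n) ℝ) := by
  have key : ∀ (v : Fin m → ℝ) (M : Matrix (Fin m) (Fin n) ℝ), ∑ i, v i • M i = Matrix.vecMul v M := by
    intro v M; ext j
    simp [Matrix.vecMul, dotProduct, Finset.sum_apply]
  replace hL := Fintype.linearIndependent_iff.mp hL
  refine Fintype.linearIndependent_iff.mpr ?_
  intro g hg
  rw [key, ← Matrix.vecMul_vecMul] at hg
  have h0 : Matrix.vecMul g T = 0 := by
    funext k
    refine hL (Matrix.vecMul g T) ?_ k
    rw [key]
    exact hg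
  have hdet : IsUnit T.det := (Matrix.isUnit_iff_isUnit_det T).mp hT
  have : g = 0 := by
    have h1 : Matrix.vecMul g (T * T⁻¹) = Matrix.vecMul 0 T⁻¹ := by
      rw [← Matrix.vecMul_vecMul, h0]
    rw [Matrix.mul_nonsing_inv T hdet, Matrix.vecMul_one, Matrix.zero_vecMul] at h1
    exact h1
  intro i; rw [this]; rfl

/-- Let `L` be a real `m × n` matrix with linearly independent rows, let
`F ⊆ ℝⁿ` be a finite set of vectors with all coordinates nonnegative, and let `T` be an
invertible real `m × m` matrix such that every row of `T * L` is a finite linear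
combination of elements of `F` with nonnegative coefficients. Then there exist `m`
linearly independent vectors `e₁, …, e_m ∈ F` such that `Σᵢ ‖eᵢ‖₀ ≤ ‖T * L‖₀`. -/
theorem exists_transversal_with_small_l0
    (m n : ℕ) (L : Matrix (Fin m) (Fin n) ℝ) (hL : LinearIndependent ℝ L)
    (F : Finset (Fin n → ℝ)) (hF : ∀ v ∈ F, ∀ j, 0 ≤ v j)
    (T : Matrix (Fin m) (Fin m) ℝ) (hT : IsUnit T)
    (hcomb : ∀ i, ∃ c : (Fin n → ℝ) → ℝ, (∀ e, 0 ≤ c e) ∧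
      (T * L) i = ∑ e ∈ F, c e • e) :
    ∃ e : Fin m → (Fin n → ℝ), LinearIndependent ℝ e ∧ (∀ i, e i ∈ F) ∧
      ∑ i, l0Vec (e i) ≤ l0Mat (T * L) := by

  classical
  choose c hc0 hcsum using hcomb
  have hTL : LinearIndependent ℝ (T * L : Matrix (Fin m) (Fin n) ℝ) := rows_li L hL T hT
  set v : Fin m → (Fin n → ℝ) := fun i => (T * L) i with hv
  set S : Fin m → Finset (Fin n → ℝ) := fun i => F.filter (fun e => c i e ≠ 0) with hS
  have hvmem : ∀ i, v i ∈ span ℝ ((S i : Finset (Fin n → ℝ)) : Set (Fin n → ℝ)) := by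
    intro i
    have hveq : v i = ∑ e ∈ S i, c i e • e := by
      rw [show v i = (∑ e ∈ F, c i e • e) from hcsum i]
      exact (Finset.sum_filter_of_ne (s := F) (p := fun e => c i e ≠ 0)
        (f := fun e => c i e • e) (fun e _ hne hc => hne (by simp [hc]))).symm
    rw [hveq]
    exact Submodule.sum_smul_mem _ _ (fun e he => subset_span (Finset.mem_coe.mpr he))
  have hHall : ∀ I : Finset (Fin m),
      I.card ≤ finrank ℝ (span ℝ ((I.sup S : Finset (Fin n → ℝ)) : Set (Fin n → ℝ))) := by
    intro I
    have hli : LinearIndependent ℝ (fun i : I => v i) :=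
      hTL.comp _ Subtype.val_injective
    have hrank : finrank ℝ (span ℝ (Set.range (fun i : I => v i))) = I.card := by
      rw [finrank_span_eq_card hli, Fintype.card_coe]
    have hle : span ℝ (Set.range fun i : I => v i) ≤
        span ℝ ((I.sup S : Finset (Fin n → ℝ)) : Set (Fin n → ℝ)) := by
      rw [Submodule.span_le]
      rintro z ⟨i, rfl⟩
      exact Submodule.span_mono (Finset.coe_subset.mpr (Finset.le_sup i.2)) (hvmem i)
    rw [← hrank]
    exact Submodule.finrank_mono hle
  obtain ⟨e, he1, he2⟩ := rado_aux m (∑ i, (S i).card) S rfl hHall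
  refine ⟨e, he2, fun i => (Finset.mem_filter.mp (he1 i)).1, ?_⟩
  have hbound : ∀ i, l0Vec (e i) ≤ l0Vec (v i) := by
    intro i
    obtain ⟨heF, hce⟩ := Finset.mem_filter.mp (he1 i)
    apply Set.ncard_le_ncard _ (Set.toFinite _)
    intro j hj
    simp only [Set.mem_setOf_eq] at hj ⊢
    have hpos : 0 < v i j := by
      have : v i j = ∑ e' ∈ F, c i e' * e' j := by
        rw [show v i = (∑ e ∈ F, c i e • e) from hcsum i]
        simp [Finset.sum_apply]
      rw [this]
      refine Finset.sum_pos' (fun e' he' => mul_nonneg (hc0 i e') (hF e' he' j)) ?_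
      exact ⟨e i, heF, mul_pos (lt_of_le_of_ne (hc0 i (e i)) (Ne.symm hce))
        (lt_of_le_of_ne (hF (e i) heF j) (Ne.symm hj))⟩
    exact ne_of_gt hpos
  calc ∑ i, l0Vec (e i) ≤ ∑ i, l0Vec (v i) := Finset.sum_le_sum fun i _ => hbound i
    _ = l0Mat (T * L) := (l0Mat_eq_sum (T * L)).symm
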